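/- arXiv:1202.2915 — 2 statements merged into one kernel-verified Lean document; each statement's English description precedes it below -/
import Mathlib

section
/- Let A, B be 2×2 complex matrices with |det A| = |det B| = 1, and let w₁, w₂, w₃ be unit vectors in ℂ². Then |w₁ ∧ A w₂| ≤ |w₁ ∧ A w₃| + √2 · ‖A⁻¹‖ · |w₂ ∧ w₃|, where u ∧ v denotes the determinant of the 2×2 matrix with columns u and v, and ‖·‖ is the operator norm. -/
open scoped InnerProductSpace
/-- The wedge (2×2 determinant) of two vectors in ℂ². -/
noncomputable def wedge (u v : Fin 2 → ℂ) : ℂ := u 0 * v 1 - u 1 * v 0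

/-- Operator norm of a 2×2 complex matrix w.r.t. the Euclidean norm on ℂ². -/
noncomputable def opNorm (A : Matrix (Fin 2) (Fin 2) ℂ) : ℝ :=
  ‖Matrix.toEuclideanCLM (𝕜 := ℂ) A‖

lemma wedge_mulVec (A : Matrix (Fin 2) (Fin 2) ℂ) (u v : Fin 2 → ℂ) :
    wedge (A.mulVec u) (A.mulVec v) = A.det * wedge u v := by
  simp only [wedge, Matrix.mulVec, dotProduct, Fin.sum_univ_two, Matrix.det_fin_two]
  ring

lemma lagrange (u v : EuclideanSpace ℂ (Fin 2)) :
    (‖wedge u v‖)^2 + (‖⟪u, v⟫_ℂ‖)^2 = ‖u‖^2 * ‖v‖^2 := by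
  have hn : ∀ x : EuclideanSpace ℂ (Fin 2),
      ‖x‖^2 = Complex.normSq (x 0) + Complex.normSq (x 1) := by
    intro x
    rw [EuclideanSpace.norm_eq, Real.sq_sqrt (by positivity)]
    simp [Fin.sum_univ_two, ← Complex.sq_norm]
  have hi : ⟪u, v⟫_ℂ = (starRingEnd ℂ) (u 0) * v 0 + (starRingEnd ℂ) (u 1) * v 1 := by
    simp [PiLp.inner_apply, Fin.sum_univ_two, RCLike.inner_apply]
    ring
  rw [hn, hn, hi, Complex.sq_norm, Complex.sq_norm, wedge]
  simp only [Complex.normSq_apply, Complex.sub_re, Complex.sub_im, Complex.mul_re,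
    Complex.mul_im, Complex.add_re, Complex.add_im, Complex.conj_re, Complex.conj_im]
  ring

lemma abs_wedge_le (u v : EuclideanSpace ℂ (Fin 2)) :
    ‖wedge u v‖ ≤ ‖u‖ * ‖v‖ := by
  have h := lagrange u v
  nlinarith [norm_nonneg (wedge u v), norm_nonneg u, norm_nonneg v,
    sq_nonneg (‖⟪u, v⟫_ℂ‖), mul_nonneg (norm_nonneg u) (norm_nonneg v)]

theorem stmt0 (A B : Matrix (Fin 2) (Fin 2) ℂ)
    (hA : ‖A.det‖ = 1) (hB : ‖B.det‖ = 1)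
    (w₁ w₂ w₃ : EuclideanSpace ℂ (Fin 2))
    (h₁ : ‖w₁‖ = 1) (h₂ : ‖w₂‖ = 1) (h₃ : ‖w₃‖ = 1) :
    ‖wedge w₁ (A.mulVec w₂)‖ ≤
      ‖wedge w₁ (A.mulVec w₃)‖ +
        Real.sqrt 2 * opNorm A⁻¹ * ‖wedge w₂ w₃‖ := by
  have hdet : IsUnit A.det := by
    apply isUnit_iff_ne_zero.2
    intro h; rw [h] at hA; simp at hA
  set c : ℂ := ⟪w₂, w₃⟫_ℂ with hc
  set e : ℂ := if c = 0 then 1 else (starRingEnd ℂ) c / (‖c‖ : ℂ) with he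
  have habse : ‖e‖ = 1 := by
    rw [he]; split_ifs with h
    · simp
    · simp [norm_div, Complex.norm_conj, Complex.norm_real,
        abs_of_nonneg (norm_nonneg c), div_self (norm_ne_zero_iff.mpr h)]
  have hec : e * c = (‖c‖ : ℂ) := by
    rw [he]; split_ifs with h
    · simp [h]
    · rw [div_mul_eq_mul_div, mul_comm ((starRingEnd ℂ) c) c, Complex.mul_conj,
        Complex.normSq_eq_norm_sq]
      rw [div_eq_iff (by exact_mod_cast norm_ne_zero_iff.mpr h)]
      push_cast; ring
  have hcle : ‖c‖ ≤ 1 := by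
    have := norm_inner_le_norm (𝕜 := ℂ) w₂ w₃
    simpa [h₂, h₃, hc] using this
  set d : EuclideanSpace ℂ (Fin 2) := w₂ - e • w₃ with hd
  have hdsq : ‖d‖^2 = 2 - 2 * ‖c‖ := by
    have hns := @norm_sub_sq ℂ _ _ _ _ w₂ (e • w₃)
    rw [hd, hns, inner_smul_right, h₂, norm_smul, h₃, ← hc, hec,
      habse]
    simp [Complex.ofReal_re]
    ring
  have hw23 : ‖d‖ ≤ Real.sqrt 2 * ‖wedge w₂ w₃‖ := by
    have hl := lagrange w₂ w₃
    rw [h₂, h₃, ← hc] at hl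
    have hsq : ‖d‖^2 ≤ (Real.sqrt 2 * ‖wedge w₂ w₃‖)^2 := by
      rw [mul_pow, Real.sq_sqrt (by norm_num : (0:ℝ) ≤ 2), hdsq]
      nlinarith [norm_nonneg c]
    have hpos : (0:ℝ) ≤ Real.sqrt 2 * ‖wedge w₂ w₃‖ := by positivity
    nlinarith [norm_nonneg d]
  set u₁ : EuclideanSpace ℂ (Fin 2) := (WithLp.equiv 2 _).symm (A⁻¹.mulVec w₁) with hu₁
  have hAu₁ : A.mulVec u₁ = (w₁ : Fin 2 → ℂ) := by
    show A.mulVec (A⁻¹.mulVec w₁) = (w₁ : Fin 2 → ℂ)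
    rw [Matrix.mulVec_mulVec, Matrix.mul_nonsing_inv A hdet, Matrix.one_mulVec]
  have hu₁norm : ‖u₁‖ ≤ opNorm A⁻¹ := by
    have heq : Matrix.toEuclideanCLM (𝕜 := ℂ) A⁻¹ w₁ = u₁ :=
      Matrix.toEuclideanCLM_toLp A⁻¹ w₁
    have := (Matrix.toEuclideanCLM (𝕜 := ℂ) A⁻¹).le_opNorm w₁
    rw [heq, h₁, mul_one] at this
    exact this
  -- split
  have hsplit : wedge w₁ (A.mulVec w₂) =
      e * wedge w₁ (A.mulVec w₃) + wedge w₁ (A.mulVec d) := by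
    have hdi : ∀ i, (d : Fin 2 → ℂ) i = w₂ i - e * w₃ i := by
      intro i; rw [hd]; simp [PiLp.sub_apply, PiLp.smul_apply, smul_eq_mul]
    simp only [wedge, Matrix.mulVec, dotProduct, Fin.sum_univ_two, hdi]
    ring
  have habsd : ‖wedge w₁ (A.mulVec d)‖ ≤ opNorm A⁻¹ * ‖d‖ := by
    calc ‖wedge w₁ (A.mulVec d)‖
        = ‖wedge (A.mulVec u₁) (A.mulVec d)‖ := by rw [hAu₁]
      _ = ‖A.det‖ * ‖wedge u₁ d‖ := by
          rw [wedge_mulVec, norm_mul]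
      _ = ‖wedge u₁ d‖ := by rw [hA, one_mul]
      _ ≤ ‖u₁‖ * ‖d‖ := abs_wedge_le u₁ d
      _ ≤ opNorm A⁻¹ * ‖d‖ := by
          exact mul_le_mul_of_nonneg_right hu₁norm (norm_nonneg d)
  calc ‖wedge w₁ (A.mulVec w₂)‖
      ≤ ‖e * wedge w₁ (A.mulVec w₃)‖ + ‖wedge w₁ (A.mulVec d)‖ := by
        rw [hsplit]; exact norm_add_le _ _
    _ = ‖wedge w₁ (A.mulVec w₃)‖ + ‖wedge w₁ (A.mulVec d)‖ := by
        rw [norm_mul, habse, one_mul]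
    _ ≤ ‖wedge w₁ (A.mulVec w₃)‖ + opNorm A⁻¹ * ‖d‖ := by linarith
    _ ≤ ‖wedge w₁ (A.mulVec w₃)‖ +
        Real.sqrt 2 * opNorm A⁻¹ * ‖wedge w₂ w₃‖ := by
        have := mul_le_mul_of_nonneg_left hw23 (norm_nonneg (Matrix.toEuclideanCLM (𝕜 := ℂ) A⁻¹))
        have h' : opNorm A⁻¹ * ‖d‖ ≤ Real.sqrt 2 * opNorm A⁻¹ * ‖wedge w₂ w₃‖ := by
          have h0 : (0:ℝ) ≤ opNorm A⁻¹ := norm_nonneg _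
          nlinarith
        linarith
end

section
/- Let A, B ∈ GL(2,ℂ) with |det A| = |det B| = 1, and let u_A⁻, v_A⁺ etc. be as given by the singular value decomposition. Then |v_{AB}⁺ ∧ v_A⁺| ≤ ‖A‖⁻² ‖B‖² and |u_{BA}⁻ ∧ u_A⁻| ≤ ‖A‖⁻² ‖B‖². -/
/-- `IsSVD A u⁺ u⁻ v⁺ v⁻` records the data coming from the polar (singular value)
decomposition of a matrix `A` with `|det A| = 1`:  orthonormal pairs `u⁺ ⊥ u⁻`,
`v⁺ ⊥ v⁻` of unit vectors with `A u⁺ = ‖A‖ v⁺` and `A u⁻ = ‖A‖⁻¹ v⁻`. -/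
def IsSVD (A : Matrix (Fin 2) (Fin 2) ℂ)
    (up um vp vm : EuclideanSpace ℂ (Fin 2)) : Prop :=
  ‖up‖ = 1 ∧ ‖um‖ = 1 ∧ ‖vp‖ = 1 ∧ ‖vm‖ = 1 ∧
    inner (𝕜 := ℂ) up um = (0 : ℂ) ∧ inner (𝕜 := ℂ) vp vm = (0 : ℂ) ∧
    A.mulVec up = (opNorm A : ℂ) • (vp : Fin 2 → ℂ) ∧
    A.mulVec um = ((opNorm A)⁻¹ : ℂ) • (vm : Fin 2 → ℂ)

open Matrix
open scoped Matrix.Norms.L2Operator InnerProductSpace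
set_option maxHeartbeats 1000000

namespace Stmt7Aux

lemma opNorm_eq (A : Matrix (Fin 2) (Fin 2) ℂ) : opNorm A = ‖A‖ :=
  (Matrix.cstar_norm_def A).symm

noncomputable def ev (x : Fin 2 → ℂ) : EuclideanSpace ℂ (Fin 2) :=
  (EuclideanSpace.equiv (Fin 2) ℂ).symm x

@[simp] lemma ev_apply (x : Fin 2 → ℂ) (i : Fin 2) : ev x i = x i := rfl

lemma ev_smul (c : ℂ) (w : Fin 2 → ℂ) : ev (c • w) = c • ev w := rfl

lemma ev_coe (v : EuclideanSpace ℂ (Fin 2)) : ev (v : Fin 2 → ℂ) = v := rfl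

lemma mulVec_le (A : Matrix (Fin 2) (Fin 2) ℂ) (x : EuclideanSpace ℂ (Fin 2)) :
    ‖ev (A *ᵥ x)‖ ≤ ‖A‖ * ‖x‖ :=
  A.l2_opNorm_mulVec x

lemma inner_ev (x y : Fin 2 → ℂ) :
    ⟪ev x, ev y⟫_ℂ = star (x 0) * y 0 + star (x 1) * y 1 := by
  simp [ev, PiLp.inner_apply, Fin.sum_univ_two, RCLike.inner_apply, mul_comm]

lemma norm_ev (x : Fin 2 → ℂ) :
    ‖ev x‖ = Real.sqrt (‖x 0‖ ^ 2 + ‖x 1‖ ^ 2) := by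
  simp [ev, EuclideanSpace.norm_eq, Fin.sum_univ_two]

noncomputable def W (b : EuclideanSpace ℂ (Fin 2)) : EuclideanSpace ℂ (Fin 2) :=
  ev ![star (b 1), -star (b 0)]

lemma norm_W (b : EuclideanSpace ℂ (Fin 2)) : ‖W b‖ = ‖b‖ := by
  rw [W, norm_ev, show (b : EuclideanSpace ℂ (Fin 2)) = ev (fun i => b i) from rfl, norm_ev]
  simp [add_comm]

lemma inner_W_self (b : EuclideanSpace ℂ (Fin 2)) : ⟪W b, b⟫_ℂ = 0 := by
  rw [W, show (b : EuclideanSpace ℂ (Fin 2)) = ev (fun i => b i) from rfl, inner_ev]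
  simp
  ring

lemma wedge_eq_inner (a b : EuclideanSpace ℂ (Fin 2)) :
    wedge a b = ⟪W b, a⟫_ℂ := by
  rw [W, show (a : EuclideanSpace ℂ (Fin 2)) = ev (fun i => a i) from rfl, inner_ev]
  simp [wedge]
  ring

lemma expand (u w z : EuclideanSpace ℂ (Fin 2)) (hu : ‖u‖ = 1) (hw : ‖w‖ = 1)
    (huw : ⟪u, w⟫_ℂ = 0) : z = ⟪u, z⟫_ℂ • u + ⟪w, z⟫_ℂ • w := by
  have hwu : ⟪w, u⟫_ℂ = 0 := by
    rw [← inner_conj_symm, huw]; simp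
  have horth : Orthonormal ℂ ![u, w] := by
    rw [orthonormal_iff_ite]
    intro i j
    have huu : ⟪u, u⟫_ℂ = 1 := by
      rw [inner_self_eq_norm_sq_to_K, hu]; norm_num
    have hww : ⟪w, w⟫_ℂ = 1 := by
      rw [inner_self_eq_norm_sq_to_K, hw]; norm_num
    fin_cases i <;> fin_cases j
    · simpa using huu
    · simpa using huw
    · simpa using hwu
    · simpa using hww
  have hcard : Fintype.card (Fin 2) = Module.finrank ℂ (EuclideanSpace ℂ (Fin 2)) := by
    simp
  let b := basisOfOrthonormalOfCardEqFinrank horth hcard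
  have hb : ⇑b = ![u, w] := coe_basisOfOrthonormalOfCardEqFinrank horth hcard
  let onb := b.toOrthonormalBasis (by rwa [hb])
  have honb : ⇑onb = ![u, w] := by
    rw [show ⇑onb = ⇑b from Module.Basis.coe_toOrthonormalBasis b _, hb]
  have := onb.sum_repr' z
  rw [Fin.sum_univ_two, honb] at this
  simpa using this.symm

lemma opNorm_adjugate_le (M : Matrix (Fin 2) (Fin 2) ℂ) : ‖M.adjugate‖ ≤ ‖M‖ := by
  rw [Matrix.cstar_norm_def]
  apply ContinuousLinearMap.opNorm_le_bound _ (norm_nonneg M)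
  intro x
  have key : (Matrix.toEuclideanCLM (𝕜 := ℂ) M.adjugate) x = ev (M.adjugate *ᵥ x) := rfl
  rw [key]
  set y : EuclideanSpace ℂ (Fin 2) := ev ![star (x 1), -star (x 0)] with hy
  have h1 : ‖ev (M.adjugate *ᵥ x)‖ = ‖ev (Mᴴ *ᵥ y)‖ := by
    rw [norm_ev, norm_ev]
    congr 1
    have hadj : M.adjugate = !![M 1 1, -(M 0 1); -(M 1 0), M 0 0] := Matrix.adjugate_fin_two M
    rw [hadj]
    simp only [Matrix.mulVec, dotProduct, Fin.sum_univ_two, hy,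
      Matrix.conjTranspose_apply, ev_apply, Matrix.of_apply, Matrix.cons_val', Matrix.cons_val_zero,
      Matrix.cons_val_one, Matrix.head_cons, Matrix.empty_val', Matrix.cons_val_fin_one,
      Matrix.head_fin_const, star_neg, mul_neg, RCLike.star_def]
    have e1 : (starRingEnd ℂ) (M 0 0) * (starRingEnd ℂ) (x 1) +
        -((starRingEnd ℂ) (M 1 0) * (starRingEnd ℂ) (x 0)) =
        (starRingEnd ℂ) (M 0 0 * x 1 - M 1 0 * x 0) := by
      simp only [map_sub, _root_.map_mul]; ring
    have e2 : (starRingEnd ℂ) (M 0 1) * (starRingEnd ℂ) (x 1) +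
        -((starRingEnd ℂ) (M 1 1) * (starRingEnd ℂ) (x 0)) =
        (starRingEnd ℂ) (M 0 1 * x 1 - M 1 1 * x 0) := by
      simp only [map_sub, _root_.map_mul]; ring
    rw [e1, e2, Complex.norm_conj, Complex.norm_conj,
      show M 1 1 * x 0 + -M 0 1 * x 1 = -(M 0 1 * x 1 - M 1 1 * x 0) by ring,
      show -M 1 0 * x 0 + M 0 0 * x 1 = M 0 0 * x 1 - M 1 0 * x 0 by ring,
      norm_neg, add_comm]
  have h2 : ‖y‖ = ‖x‖ := by
    rw [hy, norm_ev, show (x : EuclideanSpace ℂ (Fin 2)) = ev (fun i => x i) from rfl, norm_ev]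
    simp [add_comm]
  calc ‖ev (M.adjugate *ᵥ x)‖ = ‖ev (Mᴴ *ᵥ y)‖ := h1
    _ ≤ ‖Mᴴ‖ * ‖y‖ := mulVec_le _ _
    _ = ‖M‖ * ‖x‖ := by rw [Matrix.l2_opNorm_conjTranspose, h2]

lemma norm_le_mul_mulVec {M : Matrix (Fin 2) (Fin 2) ℂ} (hM : ‖M.det‖ = 1)
    (x : EuclideanSpace ℂ (Fin 2)) : ‖x‖ ≤ ‖M‖ * ‖ev (M *ᵥ x)‖ := by
  have h1 : M.adjugate *ᵥ (M *ᵥ (x : Fin 2 → ℂ)) = M.det • (x : Fin 2 → ℂ) := by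
    rw [Matrix.mulVec_mulVec, Matrix.adjugate_mul, Matrix.smul_mulVec,
      Matrix.one_mulVec]
  have h2 : ‖ev (M.det • (x : Fin 2 → ℂ))‖ = ‖x‖ := by
    have : ev (M.det • (x : Fin 2 → ℂ)) = M.det • x := rfl
    rw [this, norm_smul, hM, one_mul]
  calc ‖x‖ = ‖ev (M.adjugate *ᵥ (M *ᵥ (x : Fin 2 → ℂ)))‖ := by rw [h1, h2]
    _ = ‖ev (M.adjugate *ᵥ (ev (M *ᵥ x) : Fin 2 → ℂ))‖ := rfl
    _ ≤ ‖M.adjugate‖ * ‖ev (M *ᵥ x)‖ := mulVec_le _ _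
    _ ≤ ‖M‖ * ‖ev (M *ᵥ x)‖ :=
        mul_le_mul_of_nonneg_right (opNorm_adjugate_le M) (norm_nonneg _)

lemma one_le_opNorm {M : Matrix (Fin 2) (Fin 2) ℂ} (hM : ‖M.det‖ = 1) :
    1 ≤ ‖M‖ := by
  set x : EuclideanSpace ℂ (Fin 2) := EuclideanSpace.single 0 1 with hx
  have hxn : ‖x‖ = 1 := by simp [hx]
  have h1 : ‖x‖ ≤ ‖M‖ * ‖ev (M *ᵥ x)‖ := norm_le_mul_mulVec hM x
  have h2 : ‖ev (M *ᵥ x)‖ ≤ ‖M‖ * ‖x‖ := mulVec_le _ _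
  nlinarith [norm_nonneg (ev (M *ᵥ (x : Fin 2 → ℂ))), hxn, norm_nonneg M]

lemma mulVec_linear (M : Matrix (Fin 2) (Fin 2) ℂ) (c d : ℂ)
    (p q : EuclideanSpace ℂ (Fin 2)) :
    ev (M *ᵥ (((c • p + d • q : EuclideanSpace ℂ (Fin 2))) : Fin 2 → ℂ))
      = c • ev (M *ᵥ p) + d • ev (M *ᵥ q) := by
  ext i
  simp [ev, Matrix.mulVec, dotProduct, Fin.sum_univ_two]
  fin_cases i <;> simp <;> ring

lemma norm_smul_same (M : Matrix (Fin 2) (Fin 2) ℂ) {c : ℂ} (hc : ‖c‖ = 1) :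
    ‖c • M‖ = ‖M‖ := by
  rw [norm_smul, hc, one_mul]

end Stmt7Aux

open Stmt7Aux

theorem stmt7 (A B : Matrix (Fin 2) (Fin 2) ℂ)
    (hA : ‖A.det‖ = 1) (hB : ‖B.det‖ = 1)
    (uAp uAm vAp vAm uABp uABm vABp vABm uBAp uBAm vBAp vBAm :
      EuclideanSpace ℂ (Fin 2))
    (hSVDA : IsSVD A uAp uAm vAp vAm)
    (hSVDAB : IsSVD (A * B) uABp uABm vABp vABm)
    (hSVDBA : IsSVD (B * A) uBAp uBAm vBAp vBAm) :
    ‖wedge vABp vAp‖ ≤ (opNorm A)⁻¹ ^ 2 * opNorm B ^ 2 ∧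
    ‖wedge uBAm uAm‖ ≤ (opNorm A)⁻¹ ^ 2 * opNorm B ^ 2 := by
  obtain ⟨hA1, hA2, hA3, hA4, hA5, hA6, hA7, hA8⟩ := hSVDA
  obtain ⟨hAB1, hAB2, hAB3, hAB4, hAB5, hAB6, hAB7, hAB8⟩ := hSVDAB
  obtain ⟨hBA1, hBA2, hBA3, hBA4, hBA5, hBA6, hBA7, hBA8⟩ := hSVDBA
  simp only [opNorm_eq] at hA7 hA8 hAB7 hAB8 hBA7 hBA8 ⊢
  -- basic positivity facts
  have hdetAB : ‖(A * B).det‖ = 1 := by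
    rw [Matrix.det_mul, norm_mul, hA, hB, one_mul]
  have hdetBA : ‖(B * A).det‖ = 1 := by
    rw [Matrix.det_mul, norm_mul, hA, hB, mul_one]
  have ha1 : (1 : ℝ) ≤ ‖A‖ := one_le_opNorm hA
  have hb1 : (1 : ℝ) ≤ ‖B‖ := one_le_opNorm hB
  have hab1 : (1 : ℝ) ≤ ‖A * B‖ := one_le_opNorm hdetAB
  have hba1 : (1 : ℝ) ≤ ‖B * A‖ := one_le_opNorm hdetBA
  have ha0 : (0 : ℝ) < ‖A‖ := lt_of_lt_of_le one_pos ha1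
  have hab0 : (0 : ℝ) < ‖A * B‖ := lt_of_lt_of_le one_pos hab1
  have hba0 : (0 : ℝ) < ‖B * A‖ := lt_of_lt_of_le one_pos hba1
  -- ‖A‖ ≤ ‖A*B‖ * ‖B‖  and  ‖A‖ ≤ ‖B*A‖ * ‖B‖
  have hABlow : ‖A‖ ≤ ‖A * B‖ * ‖B‖ := by
    have e : B.det • A = A * B * B.adjugate := by
      rw [Matrix.mul_assoc, Matrix.mul_adjugate, Matrix.mul_smul, Matrix.mul_one]
    calc ‖A‖ = ‖B.det • A‖ := (norm_smul_same A hB).symm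
      _ = ‖A * B * B.adjugate‖ := by rw [e]
      _ ≤ ‖A * B‖ * ‖B.adjugate‖ := Matrix.l2_opNorm_mul _ _
      _ ≤ ‖A * B‖ * ‖B‖ :=
          mul_le_mul_of_nonneg_left (opNorm_adjugate_le B) (norm_nonneg _)
  have hBAlow : ‖A‖ ≤ ‖B * A‖ * ‖B‖ := by
    have e : B.det • A = B.adjugate * (B * A) := by
      rw [← Matrix.mul_assoc, Matrix.adjugate_mul, Matrix.smul_mul, Matrix.one_mul]
    calc ‖A‖ = ‖B.det • A‖ := (norm_smul_same A hB).symm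
      _ = ‖B.adjugate * (B * A)‖ := by rw [e]
      _ ≤ ‖B.adjugate‖ * ‖B * A‖ := Matrix.l2_opNorm_mul _ _
      _ ≤ ‖B‖ * ‖B * A‖ :=
          mul_le_mul_of_nonneg_right (opNorm_adjugate_le B) (norm_nonneg _)
      _ = ‖B * A‖ * ‖B‖ := mul_comm _ _
  -- the key expansion of A *ᵥ z in singular vectors
  have key : ∀ z : EuclideanSpace ℂ (Fin 2),
      ev (A *ᵥ z) = (⟪uAp, z⟫_ℂ * (‖A‖ : ℂ)) • vAp +
        (⟪uAm, z⟫_ℂ * ((‖A‖ : ℝ)⁻¹ : ℂ)) • vAm := by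
    intro z
    have hz := expand uAp uAm z hA1 hA2 hA5
    calc ev (A *ᵥ z)
        = ev (A *ᵥ ((⟪uAp, z⟫_ℂ • uAp + ⟪uAm, z⟫_ℂ • uAm :
            EuclideanSpace ℂ (Fin 2)) : Fin 2 → ℂ)) := by
          conv_lhs => rw [hz]
      _ = ⟪uAp, z⟫_ℂ • ev (A *ᵥ uAp) + ⟪uAm, z⟫_ℂ • ev (A *ᵥ uAm) :=
          mulVec_linear A _ _ uAp uAm
      _ = ⟪uAp, z⟫_ℂ • ((‖A‖ : ℂ) • vAp) + ⟪uAm, z⟫_ℂ • (((‖A‖ : ℝ)⁻¹ : ℂ) • vAm) := by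
          rw [hA7, hA8, ev_smul, ev_smul, ev_coe, ev_coe]
      _ = (⟪uAp, z⟫_ℂ * (‖A‖ : ℂ)) • vAp + (⟪uAm, z⟫_ℂ * ((‖A‖ : ℝ)⁻¹ : ℂ)) • vAm := by
          rw [smul_smul, smul_smul]
  constructor
  · -- first inequality
    set x : EuclideanSpace ℂ (Fin 2) := ev (B *ᵥ uABp) with hxdef
    have hxB : ‖x‖ ≤ ‖B‖ := by
      calc ‖x‖ ≤ ‖B‖ * ‖uABp‖ := mulVec_le _ _
        _ = ‖B‖ := by rw [hAB1, mul_one]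
    have hbeta : ‖⟪uAm, x⟫_ℂ‖ ≤ ‖B‖ := by
      calc ‖⟪uAm, x⟫_ℂ‖ = ‖⟪uAm, x⟫_ℂ‖ := rfl
        _ ≤ ‖uAm‖ * ‖x‖ := norm_inner_le_norm _ _
        _ = ‖x‖ := by rw [hA2, one_mul]
        _ ≤ ‖B‖ := hxB
    have hAx : ev (A *ᵥ x) = ((‖A * B‖ : ℝ) : ℂ) • vABp := by
      have h1 : A *ᵥ ((x : EuclideanSpace ℂ (Fin 2)) : Fin 2 → ℂ) = (A * B) *ᵥ uABp := by
        rw [hxdef]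
        exact Matrix.mulVec_mulVec _ A B
      calc ev (A *ᵥ x) = ev ((A * B) *ᵥ uABp) := by rw [h1]
        _ = ev ((‖A * B‖ : ℂ) • (vABp : Fin 2 → ℂ)) := by rw [hAB7]
        _ = ((‖A * B‖ : ℝ) : ℂ) • vABp := by rw [ev_smul, ev_coe]
    have hvABp : vABp = (((‖A * B‖ : ℝ) : ℂ))⁻¹ • ev (A *ᵥ x) := by
      rw [hAx, smul_smul, inv_mul_cancel₀ (by exact_mod_cast ne_of_gt hab0), one_smul]
    have hinner : ⟪W vAp, vABp⟫_ℂ =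
        (((‖A * B‖ : ℝ) : ℂ))⁻¹ * (⟪uAm, x⟫_ℂ * ((‖A‖ : ℝ)⁻¹ : ℂ) * ⟪W vAp, vAm⟫_ℂ) := by
      rw [hvABp, inner_smul_right, key x, inner_add_right, inner_smul_right,
        inner_smul_right, inner_W_self vAp]
      ring
    have hWvAm : ‖⟪W vAp, vAm⟫_ℂ‖ ≤ 1 := by
      calc ‖⟪W vAp, vAm⟫_ℂ‖ = ‖⟪W vAp, vAm⟫_ℂ‖ := rfl
        _ ≤ ‖W vAp‖ * ‖vAm‖ := norm_inner_le_norm _ _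
        _ = 1 := by rw [norm_W, hA3, hA4, one_mul]
    have habs : ‖wedge vABp vAp‖ =
        ‖A * B‖⁻¹ * (‖⟪uAm, x⟫_ℂ‖ * ‖A‖⁻¹ * ‖⟪W vAp, vAm⟫_ℂ‖) := by
      rw [wedge_eq_inner, hinner]
      simp only [norm_mul, norm_inv, Complex.norm_real, Real.norm_eq_abs, abs_of_pos ha0,
        abs_of_pos hab0]
    rw [habs]
    have hABinv : ‖A * B‖⁻¹ ≤ ‖B‖ * ‖A‖⁻¹ := by
      rw [inv_le_iff_one_le_mul₀ hab0]
      nlinarith [mul_le_mul_of_nonneg_right hABlow (inv_nonneg.mpr ha0.le),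
        mul_inv_cancel₀ (ne_of_gt ha0)]
    have hc1 : (0:ℝ) ≤ ‖⟪uAm, x⟫_ℂ‖ := norm_nonneg _
    have hc2 : (0:ℝ) ≤ ‖⟪W vAp, vAm⟫_ℂ‖ := norm_nonneg _
    have hainv : (0:ℝ) ≤ ‖A‖⁻¹ := inv_nonneg.mpr ha0.le
    have t1 : ‖⟪uAm, x⟫_ℂ‖ * ‖A‖⁻¹ * ‖⟪W vAp, vAm⟫_ℂ‖
        ≤ ‖B‖ * ‖A‖⁻¹ := by
      calc ‖⟪uAm, x⟫_ℂ‖ * ‖A‖⁻¹ * ‖⟪W vAp, vAm⟫_ℂ‖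
          ≤ (‖B‖ * ‖A‖⁻¹) * 1 :=
            mul_le_mul (mul_le_mul_of_nonneg_right hbeta hainv) hWvAm hc2
              (mul_nonneg (norm_nonneg B) hainv)
        _ = ‖B‖ * ‖A‖⁻¹ := mul_one _
    calc ‖A * B‖⁻¹ * (‖⟪uAm, x⟫_ℂ‖ * ‖A‖⁻¹ * ‖⟪W vAp, vAm⟫_ℂ‖)
        ≤ (‖B‖ * ‖A‖⁻¹) * (‖B‖ * ‖A‖⁻¹) :=
          mul_le_mul hABinv t1 (mul_nonneg (mul_nonneg hc1 hainv) hc2)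
            (mul_nonneg (norm_nonneg B) hainv)
      _ = ‖A‖⁻¹ ^ 2 * ‖B‖ ^ 2 := by ring
  · -- second inequality
    set u : EuclideanSpace ℂ (Fin 2) := uBAm with hudef
    have hvApvAp : ⟪vAp, vAp⟫_ℂ = 1 := by
      rw [inner_self_eq_norm_sq_to_K, hA3]; norm_num
    have hip : ⟪vAp, ev (A *ᵥ u)⟫_ℂ = ⟪uAp, u⟫_ℂ * (‖A‖ : ℂ) := by
      rw [key u, inner_add_right, inner_smul_right, inner_smul_right, hvApvAp, hA6]
      ring
    have habs1 : ‖⟪uAp, u⟫_ℂ‖ * ‖A‖ ≤ ‖ev (A *ᵥ u)‖ := by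
      have h := norm_inner_le_norm (𝕜 := ℂ) vAp (ev (A *ᵥ u))
      rw [hip, hA3, one_mul] at h
      calc ‖⟪uAp, u⟫_ℂ‖ * ‖A‖
          = ‖⟪uAp, u⟫_ℂ * (‖A‖ : ℂ)‖ := by
            rw [norm_mul, Complex.norm_real, Real.norm_eq_abs, abs_of_pos ha0]
        _ ≤ ‖ev (A *ᵥ u)‖ := h
    have hBAu : ev ((B * A) *ᵥ u) = (((‖B * A‖ : ℝ) : ℂ))⁻¹ • vBAm := by
      calc ev ((B * A) *ᵥ u) = ev ((((‖B * A‖ : ℝ) : ℂ))⁻¹ • (vBAm : Fin 2 → ℂ)) := by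
            rw [hBA8]
        _ = (((‖B * A‖ : ℝ) : ℂ))⁻¹ • vBAm := by rw [ev_smul, ev_coe]
    have hnormBAu : ‖ev ((B * A) *ᵥ u)‖ = ‖B * A‖⁻¹ := by
      rw [hBAu, norm_smul, hBA4, mul_one, norm_inv, Complex.norm_real,
        Real.norm_eq_abs, abs_of_pos hba0]
    have hBu : ‖ev (A *ᵥ u)‖ ≤ ‖B‖ * ‖B * A‖⁻¹ := by
      have h1 : ‖ev (A *ᵥ u)‖ ≤ ‖B‖ * ‖ev (B *ᵥ (ev (A *ᵥ u)))‖ :=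
        norm_le_mul_mulVec hB (ev (A *ᵥ u))
      have h2 : B *ᵥ ((ev (A *ᵥ u) : EuclideanSpace ℂ (Fin 2)) : Fin 2 → ℂ)
          = (B * A) *ᵥ u := Matrix.mulVec_mulVec _ B A
      rw [show ev (B *ᵥ (ev (A *ᵥ u))) = ev ((B * A) *ᵥ u) from congrArg ev h2,
        hnormBAu] at h1
      exact h1
    have halpha : ‖⟪uAp, u⟫_ℂ‖ ≤ ‖A‖⁻¹ ^ 2 * ‖B‖ ^ 2 := by
      have hBAinv : ‖B * A‖⁻¹ ≤ ‖B‖ * ‖A‖⁻¹ := by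
        rw [inv_le_iff_one_le_mul₀ hba0]
        nlinarith [mul_le_mul_of_nonneg_right hBAlow (inv_nonneg.mpr ha0.le),
          mul_inv_cancel₀ (ne_of_gt ha0)]
      have := le_trans habs1 (le_trans hBu
        (mul_le_mul_of_nonneg_left hBAinv (norm_nonneg B)))
      rw [show ‖A‖⁻¹ ^ 2 * ‖B‖ ^ 2 = (‖B‖ * (‖B‖ * ‖A‖⁻¹)) * ‖A‖⁻¹ by ring]
      calc ‖⟪uAp, u⟫_ℂ‖ = (‖⟪uAp, u⟫_ℂ‖ * ‖A‖) * ‖A‖⁻¹ := by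
            field_simp
        _ ≤ (‖B‖ * (‖B‖ * ‖A‖⁻¹)) * ‖A‖⁻¹ :=
            mul_le_mul_of_nonneg_right this (inv_nonneg.mpr (le_of_lt ha0))
    -- now the wedge
    have hzexp := expand uAp uAm u hA1 hA2 hA5
    have hinner2 : ⟪W uAm, u⟫_ℂ = ⟪uAp, u⟫_ℂ * ⟪W uAm, uAp⟫_ℂ := by
      conv_lhs => rw [hzexp]
      rw [inner_add_right, inner_smul_right, inner_smul_right, inner_W_self uAm]
      ring
    have hWuAp : ‖⟪W uAm, uAp⟫_ℂ‖ ≤ 1 := by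
      calc ‖⟪W uAm, uAp⟫_ℂ‖ = ‖⟪W uAm, uAp⟫_ℂ‖ := rfl
        _ ≤ ‖W uAm‖ * ‖uAp‖ := norm_inner_le_norm _ _
        _ = 1 := by rw [norm_W, hA2, hA1, one_mul]
    calc ‖wedge uBAm uAm‖
        = ‖⟪uAp, u⟫_ℂ‖ * ‖⟪W uAm, uAp⟫_ℂ‖ := by
          rw [wedge_eq_inner, hinner2, norm_mul]
      _ ≤ ‖⟪uAp, u⟫_ℂ‖ * 1 :=
          mul_le_mul_of_nonneg_left hWuAp (norm_nonneg _)
      _ = ‖⟪uAp, u⟫_ℂ‖ := mul_one _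
      _ ≤ ‖A‖⁻¹ ^ 2 * ‖B‖ ^ 2 := halpha
end
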